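/- Let Γ : [-1,0] → ℝ be continuous with minimum value Γ_min, let D(κ) := ∫_{-1}^0 (κ + 2Γ(t))^{-1/2} dt for κ ∈ (-2Γ_min, ∞), and suppose λ ∈ (-2Γ_min, ∞) satisfies D(λ) = 1. Define μ : (-2Γ_min, ∞) → ℝ by μ(κ) := (κ - λ)/(2(1 - D(κ))) for κ ≠ λ and μ(λ) := (∫_{-1}^0 (λ + 2Γ(t))^{-3/2} dt)^{-1}. Then μ is continuously differentiable and strictly increasing on (-2Γ_min, ∞). -/

import Mathlib

open MeasureTheory intervalIntegral Set

noncomputable def pfun (lam κ x : ℝ) : ℝ :=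
  Real.sqrt (κ + 2*x) * Real.sqrt (lam + 2*x) * (Real.sqrt (κ + 2*x) + Real.sqrt (lam + 2*x))

noncomputable def gfun (lam κ x : ℝ) : ℝ := -(pfun lam κ x)⁻¹

noncomputable def qfun (lam κ x : ℝ) : ℝ :=
  ((2*Real.sqrt (κ + 2*x))⁻¹ * Real.sqrt (lam + 2*x) * (Real.sqrt (κ + 2*x) + Real.sqrt (lam + 2*x))
    + Real.sqrt (κ + 2*x) * Real.sqrt (lam + 2*x) * (2*Real.sqrt (κ + 2*x))⁻¹) / (pfun lam κ x)^2

lemma pfun_pos {lam κ x : ℝ} (hA : 0 < κ + 2*x) (hB : 0 < lam + 2*x) : 0 < pfun lam κ x := by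
  have ha := Real.sqrt_pos.2 hA
  have hb := Real.sqrt_pos.2 hB
  unfold pfun; positivity

lemma sqrt_inv_sub {A B : ℝ} (hA : 0 < A) (hB : 0 < B) :
    (Real.sqrt A)⁻¹ - (Real.sqrt B)⁻¹
      = (A - B) * (-(Real.sqrt A * Real.sqrt B * (Real.sqrt A + Real.sqrt B))⁻¹) := by
  have ha := Real.sqrt_pos.2 hA
  have hb := Real.sqrt_pos.2 hB
  have haA : Real.sqrt A * Real.sqrt A = A := Real.mul_self_sqrt hA.le
  have hbB : Real.sqrt B * Real.sqrt B = B := Real.mul_self_sqrt hB.le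
  set a := Real.sqrt A
  set b := Real.sqrt B
  have hab : a + b ≠ 0 := by positivity
  field_simp
  rw [← haA, ← hbB]
  ring

lemma glam_eq {B : ℝ} (hB : 0 < B) :
    -(Real.sqrt B * Real.sqrt B * (Real.sqrt B + Real.sqrt B))⁻¹
      = (-(1/2)) * ((Real.sqrt B)⁻¹)^3 := by
  have hb := Real.sqrt_pos.2 hB
  field_simp
  ring

lemma hasDerivAt_gfun (lam x : ℝ) {κ : ℝ} (hA : 0 < κ + 2*x) (hB : 0 < lam + 2*x) :
    HasDerivAt (fun k => gfun lam k x) (qfun lam κ x) κ := by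
  have ha := Real.sqrt_pos.2 hA
  have hb := Real.sqrt_pos.2 hB
  have h1 : HasDerivAt (fun k : ℝ => k + 2*x) 1 κ := (hasDerivAt_id κ).add_const _
  have hsa : HasDerivAt (fun k : ℝ => Real.sqrt (k + 2*x)) ((2*Real.sqrt (κ + 2*x))⁻¹) κ := by
    have := (Real.hasDerivAt_sqrt (ne_of_gt hA)).comp κ h1
    simpa [one_div, Function.comp_def] using this
  have hp : HasDerivAt (fun k : ℝ => pfun lam k x)
      ((2*Real.sqrt (κ + 2*x))⁻¹ * Real.sqrt (lam + 2*x) * (Real.sqrt (κ + 2*x) + Real.sqrt (lam + 2*x))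
        + Real.sqrt (κ + 2*x) * Real.sqrt (lam + 2*x) * (2*Real.sqrt (κ + 2*x))⁻¹) κ :=
    (hsa.mul_const _).mul (hsa.add_const _)
  have hpne : pfun lam κ x ≠ 0 := (pfun_pos hA hB).ne'
  have := (hp.inv hpne).neg
  refine this.congr_deriv ?_
  unfold qfun
  field_simp

lemma continuous_pfun (lam : ℝ) : Continuous (fun pr : ℝ × ℝ => pfun lam pr.1 pr.2) := by
  unfold pfun; fun_prop

def Oset (lam : ℝ) : Set (ℝ × ℝ) := {pr | 0 < pr.1 + 2*pr.2 ∧ 0 < lam + 2*pr.2}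

lemma isOpen_Oset (lam : ℝ) : IsOpen (Oset lam) := by
  have h1 : IsOpen {pr : ℝ × ℝ | 0 < pr.1 + 2*pr.2} := isOpen_lt continuous_const (by fun_prop)
  have h2 : IsOpen {pr : ℝ × ℝ | 0 < lam + 2*pr.2} := isOpen_lt continuous_const (by fun_prop)
  exact h1.inter h2

lemma contOn_gfun (lam : ℝ) :
    ContinuousOn (fun pr : ℝ × ℝ => gfun lam pr.1 pr.2) (Oset lam) := by
  have := ((continuous_pfun lam).continuousOn (s := Oset lam)).inv₀
    (fun pr hpr => (pfun_pos hpr.1 hpr.2).ne')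
  exact this.neg

lemma contOn_qfun (lam : ℝ) :
    ContinuousOn (fun pr : ℝ × ℝ => qfun lam pr.1 pr.2) (Oset lam) := by
  have hsa : Continuous (fun pr : ℝ × ℝ => Real.sqrt (pr.1 + 2*pr.2)) := by fun_prop
  have hsb : Continuous (fun pr : ℝ × ℝ => Real.sqrt (lam + 2*pr.2)) := by fun_prop
  have h2sa : ContinuousOn (fun pr : ℝ × ℝ => (2*Real.sqrt (pr.1 + 2*pr.2))⁻¹) (Oset lam) :=
    (continuous_const.mul hsa).continuousOn.inv₀
      (fun pr hpr => by have := Real.sqrt_pos.2 hpr.1; exact mul_ne_zero two_ne_zero this.ne')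
  have hnum : ContinuousOn (fun pr : ℝ × ℝ =>
      (2*Real.sqrt (pr.1 + 2*pr.2))⁻¹ * Real.sqrt (lam + 2*pr.2)
        * (Real.sqrt (pr.1 + 2*pr.2) + Real.sqrt (lam + 2*pr.2))
      + Real.sqrt (pr.1 + 2*pr.2) * Real.sqrt (lam + 2*pr.2)
        * (2*Real.sqrt (pr.1 + 2*pr.2))⁻¹) (Oset lam) :=
    ((h2sa.mul hsb.continuousOn).mul (hsa.continuousOn.add hsb.continuousOn)).add
      (((hsa.mul hsb).continuousOn).mul h2sa)
  exact hnum.div ((continuous_pfun lam).pow 2).continuousOn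
    (fun pr hpr => by have := pfun_pos hpr.1 hpr.2; positivity)

/-- **Lemma 4.1** (main assertion). -/
theorem froude_parameter_C1_strictly_increasing
    (Γ : ℝ → ℝ) (hΓ : ContinuousOn Γ (Set.Icc (-1 : ℝ) 0))
    (Γmin : ℝ) (hmin : IsLeast (Γ '' Set.Icc (-1 : ℝ) 0) Γmin)
    (D : ℝ → ℝ)
    (hD : ∀ κ, D κ = ∫ t in (-1 : ℝ)..0, (Real.sqrt (κ + 2 * Γ t))⁻¹)
    (lam : ℝ) (hlam : lam ∈ Set.Ioi (-2 * Γmin)) (hDlam : D lam = 1)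
    (μ : ℝ → ℝ)
    (hμ : ∀ κ, κ ≠ lam → μ κ = (κ - lam) / (2 * (1 - D κ)))
    (hμlam : μ lam = (∫ t in (-1 : ℝ)..0, ((Real.sqrt (lam + 2 * Γ t))⁻¹) ^ 3)⁻¹) :
    ContDiffOn ℝ 1 μ (Set.Ioi (-2 * Γmin)) ∧
    StrictMonoOn μ (Set.Ioi (-2 * Γmin)) := by
  set I : Set ℝ := Set.Ioi (-2 * Γmin) with hI
  set K : Set ℝ := Γ '' Set.Icc (-1 : ℝ) 0 with hK
  have hKc : IsCompact K := isCompact_Icc.image_of_continuousOn hΓ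
  have hKne : K.Nonempty := ⟨Γmin, hmin.1⟩
  have hKlb : ∀ x ∈ K, Γmin ≤ x := fun x hx => hmin.2 hx
  have hIccK : ∀ t ∈ Set.Icc (-1 : ℝ) 0, Γ t ∈ K := fun t ht => ⟨t, ht, rfl⟩
  have hpos : ∀ κ ∈ I, ∀ x ∈ K, 0 < κ + 2*x := by
    intro κ hκ x hx
    have h1 : Γmin ≤ x := hKlb x hx
    have h2 : -2 * Γmin < κ := hκ
    linarith
  have hmemO : ∀ κ ∈ I, ∀ x ∈ K, ((κ, x) : ℝ × ℝ) ∈ Oset lam :=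
    fun κ hκ x hx => ⟨hpos κ hκ x hx, hpos lam hlam x hx⟩
  set S : ℝ → ℝ := fun κ => ∫ t in (-1 : ℝ)..0, gfun lam κ (Γ t) with hS
  set T : ℝ → ℝ := fun κ => ∫ t in (-1 : ℝ)..0, qfun lam κ (Γ t) with hT
  have huIcc : Set.uIcc (-1 : ℝ) 0 = Set.Icc (-1 : ℝ) 0 := Set.uIcc_of_le (by norm_num)
  have huIoc : Set.uIoc (-1 : ℝ) 0 = Set.Ioc (-1 : ℝ) 0 := Set.uIoc_of_le (by norm_num)
  -- continuity/integrability of the integrands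
  have hgcont : ∀ κ ∈ I, ContinuousOn (fun t => gfun lam κ (Γ t)) (Set.Icc (-1 : ℝ) 0) := by
    intro κ hκ
    exact ContinuousOn.comp' (f := fun t => ((κ, Γ t) : ℝ × ℝ)) (contOn_gfun lam)
      (continuousOn_const.prodMk hΓ) (fun t ht => hmemO κ hκ (Γ t) (hIccK t ht))
  have hqcont : ∀ κ ∈ I, ContinuousOn (fun t => qfun lam κ (Γ t)) (Set.Icc (-1 : ℝ) 0) := by
    intro κ hκ
    exact ContinuousOn.comp' (f := fun t => ((κ, Γ t) : ℝ × ℝ)) (contOn_qfun lam)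
      (continuousOn_const.prodMk hΓ) (fun t ht => hmemO κ hκ (Γ t) (hIccK t ht))
  have hgint : ∀ κ ∈ I, IntervalIntegrable (fun t => gfun lam κ (Γ t)) volume (-1) 0 := by
    intro κ hκ
    exact ((hgcont κ hκ).mono (by rw [huIcc])).intervalIntegrable
  have hfcont : ∀ κ ∈ I, ContinuousOn (fun t => (Real.sqrt (κ + 2 * Γ t))⁻¹) (Set.Icc (-1 : ℝ) 0) := by
    intro κ hκ
    have h1 : ContinuousOn (fun t => Real.sqrt (κ + 2 * Γ t)) (Set.Icc (-1 : ℝ) 0) :=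
      Real.continuous_sqrt.comp_continuousOn (continuousOn_const.add (continuousOn_const.mul hΓ))
    exact h1.inv₀ fun t ht => (Real.sqrt_pos.2 (hpos κ hκ (Γ t) (hIccK t ht))).ne'
  have hfint : ∀ κ ∈ I, IntervalIntegrable (fun t => (Real.sqrt (κ + 2 * Γ t))⁻¹) volume (-1) 0 := by
    intro κ hκ
    exact ((hfcont κ hκ).mono (by rw [huIcc])).intervalIntegrable
  -- key identity : D κ = 1 + (κ - lam) * S κ on I
  have hDS : ∀ κ ∈ I, D κ = 1 + (κ - lam) * S κ := by
    intro κ hκ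
    have h1 : D κ - D lam = ∫ t in (-1 : ℝ)..0,
        ((Real.sqrt (κ + 2 * Γ t))⁻¹ - (Real.sqrt (lam + 2 * Γ t))⁻¹) := by
      rw [hD, hD, intervalIntegral.integral_sub (hfint κ hκ) (hfint lam hlam)]
    have h2 : ∀ t ∈ Set.uIcc (-1 : ℝ) 0,
        (Real.sqrt (κ + 2 * Γ t))⁻¹ - (Real.sqrt (lam + 2 * Γ t))⁻¹
          = (κ - lam) * gfun lam κ (Γ t) := by
      intro t ht
      rw [huIcc] at ht
      have hA := hpos κ hκ (Γ t) (hIccK t ht)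
      have hB := hpos lam hlam (Γ t) (hIccK t ht)
      have := sqrt_inv_sub hA hB
      have hsub : κ + 2 * Γ t - (lam + 2 * Γ t) = κ - lam := by ring
      rw [hsub] at this
      simpa [gfun, pfun] using this
    have h3 : D κ - D lam = (κ - lam) * S κ := by
      rw [h1, intervalIntegral.integral_congr h2, intervalIntegral.integral_const_mul]
    rw [hDlam] at h3
    linarith
  -- S is negative on I
  have hSneg : ∀ κ ∈ I, S κ < 0 := by
    intro κ hκ
    have hpc : ContinuousOn (fun x => pfun lam κ x) K :=
      (Continuous.comp' (f := fun x : ℝ => ((κ, x) : ℝ × ℝ)) (continuous_pfun lam)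
        (continuous_const.prodMk continuous_id)).continuousOn
    obtain ⟨x0, hx0, hmax⟩ := hKc.exists_isMaxOn hKne hpc
    set M := pfun lam κ x0 with hM
    have hMpos : 0 < M := pfun_pos (hpos κ hκ x0 hx0) (hpos lam hlam x0 hx0)
    have hle : ∀ t ∈ Set.Icc (-1 : ℝ) 0, gfun lam κ (Γ t) ≤ -M⁻¹ := by
      intro t ht
      have hx := hIccK t ht
      have hp := pfun_pos (hpos κ hκ (Γ t) hx) (hpos lam hlam (Γ t) hx)
      have h1 : pfun lam κ (Γ t) ≤ M := hmax hx
      have h2 : M⁻¹ ≤ (pfun lam κ (Γ t))⁻¹ := by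
        apply inv_anti₀ hp h1
      simpa [gfun] using neg_le_neg h2
    have h4 : S κ ≤ ∫ _t in (-1 : ℝ)..0, -M⁻¹ :=
      intervalIntegral.integral_mono_on (by norm_num) (hgint κ hκ) intervalIntegrable_const hle
    have h5 : (∫ _t in (-1 : ℝ)..0, -M⁻¹) = -M⁻¹ := by simp
    have : 0 < M⁻¹ := by positivity
    linarith [h4, h5.symm ▸ h4]
  -- S is strictly monotone on I
  have hSmono : ∀ κ₁ ∈ I, ∀ κ₂ ∈ I, κ₁ < κ₂ → S κ₁ < S κ₂ := by
    intro κ₁ hκ₁ κ₂ hκ₂ hlt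
    have hdc : ContinuousOn (fun x => gfun lam κ₂ x - gfun lam κ₁ x) K := by
      have c1 : ContinuousOn (fun x => gfun lam κ₂ x) K :=
        ContinuousOn.comp' (f := fun x : ℝ => ((κ₂, x) : ℝ × ℝ)) (contOn_gfun lam)
          (continuousOn_const.prodMk continuousOn_id) (fun x hx => hmemO κ₂ hκ₂ x hx)
      have c2 : ContinuousOn (fun x => gfun lam κ₁ x) K :=
        ContinuousOn.comp' (f := fun x : ℝ => ((κ₁, x) : ℝ × ℝ)) (contOn_gfun lam)
          (continuousOn_const.prodMk continuousOn_id) (fun x hx => hmemO κ₁ hκ₁ x hx)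
      exact c1.sub c2
    have hdpos : ∀ x ∈ K, 0 < gfun lam κ₂ x - gfun lam κ₁ x := by
      intro x hx
      have hA1 := hpos κ₁ hκ₁ x hx
      have hA2 := hpos κ₂ hκ₂ x hx
      have hB := hpos lam hlam x hx
      have ha1 := Real.sqrt_pos.2 hA1
      have ha2 := Real.sqrt_pos.2 hA2
      have hb := Real.sqrt_pos.2 hB
      have hsqlt : Real.sqrt (κ₁ + 2*x) < Real.sqrt (κ₂ + 2*x) :=
        Real.sqrt_lt_sqrt hA1.le (by linarith)
      have hplt : pfun lam κ₁ x < pfun lam κ₂ x := by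
        unfold pfun
        have hdiff : Real.sqrt (κ₂ + 2*x) * Real.sqrt (lam + 2*x) * (Real.sqrt (κ₂ + 2*x) + Real.sqrt (lam + 2*x))
            - Real.sqrt (κ₁ + 2*x) * Real.sqrt (lam + 2*x) * (Real.sqrt (κ₁ + 2*x) + Real.sqrt (lam + 2*x))
            = Real.sqrt (lam + 2*x) * (Real.sqrt (κ₂ + 2*x) - Real.sqrt (κ₁ + 2*x))
              * (Real.sqrt (κ₂ + 2*x) + Real.sqrt (κ₁ + 2*x) + Real.sqrt (lam + 2*x)) := by ring
        have hposd : 0 < Real.sqrt (lam + 2*x) * (Real.sqrt (κ₂ + 2*x) - Real.sqrt (κ₁ + 2*x))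
            * (Real.sqrt (κ₂ + 2*x) + Real.sqrt (κ₁ + 2*x) + Real.sqrt (lam + 2*x)) := by
          have h1 : 0 < Real.sqrt (κ₂ + 2*x) - Real.sqrt (κ₁ + 2*x) := sub_pos.2 hsqlt
          positivity
        linarith
      have hp1 := pfun_pos hA1 hB
      have hinv : (pfun lam κ₂ x)⁻¹ < (pfun lam κ₁ x)⁻¹ := by
        exact inv_strictAnti₀ hp1 hplt
      simp only [gfun]
      linarith
    obtain ⟨x0, hx0, hminOn⟩ := hKc.exists_isMinOn hKne hdc
    set ε := gfun lam κ₂ x0 - gfun lam κ₁ x0 with hε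
    have hεpos : 0 < ε := hdpos x0 hx0
    have hle : ∀ t ∈ Set.Icc (-1 : ℝ) 0,
        gfun lam κ₁ (Γ t) + ε ≤ gfun lam κ₂ (Γ t) := by
      intro t ht
      have := hminOn (hIccK t ht)
      simp only [Set.mem_setOf_eq] at this
      linarith [this]
    have h4 : (∫ t in (-1 : ℝ)..0, (gfun lam κ₁ (Γ t) + ε)) ≤ S κ₂ :=
      intervalIntegral.integral_mono_on (by norm_num)
        ((hgint κ₁ hκ₁).add intervalIntegrable_const) (hgint κ₂ hκ₂) hle
    have h5 : (∫ t in (-1 : ℝ)..0, (gfun lam κ₁ (Γ t) + ε)) = S κ₁ + ε := by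
      rw [intervalIntegral.integral_add (hgint κ₁ hκ₁) intervalIntegrable_const]
      simp [hS]
    linarith [h4, h5 ▸ h4]
  -- μ agrees with -(2 S)⁻¹ on I
  have hμS : ∀ κ ∈ I, μ κ = -(2 * S κ)⁻¹ := by
    intro κ hκ
    by_cases hcase : κ = lam
    · subst hcase
      have hpt : ∀ t ∈ Set.uIcc (-1 : ℝ) 0,
          gfun κ κ (Γ t) = (-(1/2)) * ((Real.sqrt (κ + 2 * Γ t))⁻¹)^3 := by
        intro t ht
        rw [huIcc] at ht
        have hB := hpos κ hκ (Γ t) (hIccK t ht)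
        have := glam_eq hB
        simpa [gfun, pfun] using this
      have hSl : S κ = (-(1/2)) * ∫ t in (-1 : ℝ)..0, ((Real.sqrt (κ + 2 * Γ t))⁻¹)^3 := by
        show (∫ t in (-1 : ℝ)..0, gfun κ κ (Γ t)) = _
        rw [intervalIntegral.integral_congr hpt, intervalIntegral.integral_const_mul]
      rw [hμlam, hSl]
      have h2 : 2 * ((-(1/2) : ℝ) * ∫ t in (-1 : ℝ)..0, ((Real.sqrt (κ + 2 * Γ t))⁻¹)^3)
          = -(∫ t in (-1 : ℝ)..0, ((Real.sqrt (κ + 2 * Γ t))⁻¹)^3) := by ring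
      rw [h2, inv_neg, neg_neg]
    · have hne : κ - lam ≠ 0 := sub_ne_zero.2 hcase
      have hSne : S κ ≠ 0 := (hSneg κ hκ).ne
      have h1 : 1 - D κ = -((κ - lam) * S κ) := by rw [hDS κ hκ]; ring
      rw [hμ κ hcase, h1]
      field_simp
  -- derivative of S
  have hSd : ∀ κ₀ ∈ I, HasDerivAt S (T κ₀) κ₀ := by
    intro κ₀ hκ₀
    have hκ₀' : -2 * Γmin < κ₀ := hκ₀
    set ε := (κ₀ + 2 * Γmin) / 2 with hεdef
    have hεpos : 0 < ε := by rw [hεdef]; linarith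
    have hballI : ∀ k ∈ Metric.ball κ₀ ε, k ∈ I := by
      intro k hk
      rw [Metric.mem_ball, Real.dist_eq, abs_lt] at hk
      show -2 * Γmin < k
      linarith [hk.1]
    have hIccI : ∀ k ∈ Set.Icc (κ₀ - ε) (κ₀ + ε), k ∈ I := by
      intro k hk
      show -2 * Γmin < k
      have := hk.1
      linarith
    have hQc : IsCompact (Set.Icc (κ₀ - ε) (κ₀ + ε) ×ˢ K) := isCompact_Icc.prod hKc
    have hQO : (Set.Icc (κ₀ - ε) (κ₀ + ε) ×ˢ K) ⊆ Oset lam := by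
      rintro ⟨k, x⟩ ⟨hk, hx⟩
      exact hmemO k (hIccI k hk) x hx
    obtain ⟨C, hC⟩ := hQc.exists_bound_of_continuousOn ((contOn_qfun lam).mono hQO)
    have haesm : ∀ k ∈ I, AEStronglyMeasurable (fun t => gfun lam k (Γ t))
        (volume.restrict (Set.uIoc (-1 : ℝ) 0)) := by
      intro k hk
      rw [huIoc]
      exact ((hgcont k hk).mono Set.Ioc_subset_Icc_self).aestronglyMeasurable measurableSet_Ioc
    have haesmq : AEStronglyMeasurable (fun t => qfun lam κ₀ (Γ t))
        (volume.restrict (Set.uIoc (-1 : ℝ) 0)) := by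
      rw [huIoc]
      exact ((hqcont κ₀ hκ₀).mono Set.Ioc_subset_Icc_self).aestronglyMeasurable measurableSet_Ioc
    have key := intervalIntegral.hasDerivAt_integral_of_dominated_loc_of_deriv_le
      (F := fun k t => gfun lam k (Γ t)) (F' := fun k t => qfun lam k (Γ t))
      (bound := fun _ => C) (a := (-1 : ℝ)) (b := 0) (μ := volume) (Metric.ball_mem_nhds κ₀ hεpos)
      (Filter.eventually_iff_exists_mem.2 ⟨Metric.ball κ₀ ε, Metric.ball_mem_nhds κ₀ hεpos,
        fun k hk => haesm k (hballI k hk)⟩)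
      (hgint κ₀ hκ₀) haesmq
      (ae_of_all _ ?_) intervalIntegrable_const (ae_of_all _ ?_)
    · exact key.2
    · intro t ht k hk
      rw [huIoc] at ht
      have htIcc : t ∈ Set.Icc (-1 : ℝ) 0 := Set.Ioc_subset_Icc_self ht
      have hkIcc : k ∈ Set.Icc (κ₀ - ε) (κ₀ + ε) := by
        rw [Metric.mem_ball, Real.dist_eq, abs_lt] at hk
        constructor <;> linarith [hk.1, hk.2]
      exact hC (k, Γ t) ⟨hkIcc, hIccK t htIcc⟩
    · intro t ht k hk
      rw [huIoc] at ht
      have htIcc : t ∈ Set.Icc (-1 : ℝ) 0 := Set.Ioc_subset_Icc_self ht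
      have hkI := hballI k hk
      exact hasDerivAt_gfun lam (Γ t) (hpos k hkI (Γ t) (hIccK t htIcc))
        (hpos lam hlam (Γ t) (hIccK t htIcc))
  -- continuity of T on I
  have hTc : ContinuousOn T I := by
    intro κ₀ hκ₀
    apply ContinuousAt.continuousWithinAt
    have hκ₀' : -2 * Γmin < κ₀ := hκ₀
    set ε := (κ₀ + 2 * Γmin) / 2 with hεdef
    have hεpos : 0 < ε := by rw [hεdef]; linarith
    have hballI : ∀ k ∈ Metric.ball κ₀ ε, k ∈ I := by
      intro k hk
      rw [Metric.mem_ball, Real.dist_eq, abs_lt] at hk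
      show -2 * Γmin < k
      linarith [hk.1]
    have hIccI : ∀ k ∈ Set.Icc (κ₀ - ε) (κ₀ + ε), k ∈ I := by
      intro k hk
      show -2 * Γmin < k
      have := hk.1
      linarith
    have hQc : IsCompact (Set.Icc (κ₀ - ε) (κ₀ + ε) ×ˢ K) := isCompact_Icc.prod hKc
    have hQO : (Set.Icc (κ₀ - ε) (κ₀ + ε) ×ˢ K) ⊆ Oset lam := by
      rintro ⟨k, x⟩ ⟨hk, hx⟩
      exact hmemO k (hIccI k hk) x hx
    obtain ⟨C, hC⟩ := hQc.exists_bound_of_continuousOn ((contOn_qfun lam).mono hQO)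
    apply intervalIntegral.continuousAt_of_dominated_interval
        (bound := fun _ => C)
    · refine Filter.eventually_iff_exists_mem.2 ⟨Metric.ball κ₀ ε, Metric.ball_mem_nhds κ₀ hεpos,
        fun k hk => ?_⟩
      rw [huIoc]
      exact ((hqcont k (hballI k hk)).mono Set.Ioc_subset_Icc_self).aestronglyMeasurable
        measurableSet_Ioc
    · refine Filter.eventually_iff_exists_mem.2 ⟨Metric.ball κ₀ ε, Metric.ball_mem_nhds κ₀ hεpos,
        fun k hk => ae_of_all _ fun t ht => ?_⟩
      rw [huIoc] at ht
      have htIcc : t ∈ Set.Icc (-1 : ℝ) 0 := Set.Ioc_subset_Icc_self ht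
      have hkIcc : k ∈ Set.Icc (κ₀ - ε) (κ₀ + ε) := by
        rw [Metric.mem_ball, Real.dist_eq, abs_lt] at hk
        constructor <;> linarith [hk.1, hk.2]
      exact hC (k, Γ t) ⟨hkIcc, hIccK t htIcc⟩
    · exact intervalIntegrable_const
    · refine ae_of_all _ fun t ht => ?_
      rw [huIoc] at ht
      have htIcc : t ∈ Set.Icc (-1 : ℝ) 0 := Set.Ioc_subset_Icc_self ht
      have hjoint : ContinuousAt (fun pr : ℝ × ℝ => qfun lam pr.1 pr.2) (κ₀, Γ t) :=
        (contOn_qfun lam).continuousAt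
          ((isOpen_Oset lam).mem_nhds (hmemO κ₀ hκ₀ (Γ t) (hIccK t htIcc)))
      exact ContinuousAt.comp' (g := fun pr : ℝ × ℝ => qfun lam pr.1 pr.2)
        (f := fun k : ℝ => ((k, Γ t) : ℝ × ℝ)) hjoint
        ((continuous_id.prodMk continuous_const).continuousAt)
  -- S is C¹ on I
  have hSdiff : DifferentiableOn ℝ S I :=
    fun κ hκ => ((hSd κ hκ).differentiableAt).differentiableWithinAt
  have hderivS : Set.EqOn (deriv S) T I := fun κ hκ => (hSd κ hκ).deriv
  have hS1 : ContDiffOn ℝ 1 S I := by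
    rw [show (1 : WithTop ℕ∞) = 0 + 1 from (zero_add 1).symm]
    refine (contDiffOn_succ_iff_deriv_of_isOpen isOpen_Ioi).2 ⟨hSdiff, ?_, ?_⟩
    · simp
    · rw [contDiffOn_zero]
      exact hTc.congr hderivS
  have hμ1 : ContDiffOn ℝ 1 (fun κ => -(2 * S κ)⁻¹) I := by
    have h2S : ContDiffOn ℝ 1 (fun κ => 2 * S κ) I := contDiffOn_const.mul hS1
    exact (h2S.inv (fun κ hκ => by have := hSneg κ hκ; intro h; nlinarith)).neg
  constructor
  · exact hμ1.congr (fun κ hκ => hμS κ hκ)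
  · intro a ha b hb hab
    rw [hμS a ha, hμS b hb]
    have h1 := hSmono a ha b hb hab
    have h2 := hSneg b hb
    have h3 := hSneg a ha
    have h4 : (2 * S b)⁻¹ < (2 * S a)⁻¹ := by
      rw [inv_lt_inv_of_neg (by linarith) (by linarith)]
      linarith
    linarith
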